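/- Let μ be a partition and r a residue mod p. If μ has exactly k normal r-nodes, then removing all k of these normal r-nodes from μ yields a partition whose p-weight is at most the p-weight of μ. -/

import Mathlib

open scoped Classical

/-- Row `i` (0-indexed) of the partition `f : ℕ → ℕ` has a removable node of
residue `r` mod `p`: the last node `(i, f i - 1)` of the row can be removed
(i.e. `f (i+1) < f i`) and its residue `column - row (mod p)` is `r`. -/
def HasRemovable (p : ℕ) (r : ZMod p) (f : ℕ → ℕ) (i : ℕ) : Prop :=
  f (i + 1) < f i ∧ ((f i - 1 : ℕ) : ZMod p) - (i : ZMod p) = r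

/-- Row `i` (0-indexed) of the partition `f` has an addable node of residue `r`
mod `p`: the node `(i, f i)` can be added and has residue `r`. -/
def HasAddable (p : ℕ) (r : ZMod p) (f : ℕ → ℕ) (i : ℕ) : Prop :=
  (i = 0 ∨ f i < f (i - 1)) ∧ (f i : ZMod p) - (i : ZMod p) = r

/-- The removable `r`-node in row `i` is *normal*: for every addable `r`-node in an
earlier row `i' < i`, there are strictly more removable `r`-nodes than addable
`r`-nodes in the rows strictly between them. -/
def IsNormal (p : ℕ) (r : ZMod p) (f : ℕ → ℕ) (i : ℕ) : Prop :=
  HasRemovable p r f i ∧ ∀ i' < i, HasAddable p r f i' →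
    Set.ncard {i'' | i' < i'' ∧ i'' < i ∧ HasAddable p r f i''} <
      Set.ncard {i'' | i' < i'' ∧ i'' < i ∧ HasRemovable p r f i''}

/-- The hook length of the node `(i, j)` (0-indexed) of the partition `f`:
arm length plus leg length plus one, where the column length of column `j`
is `#{i' | j < f i'}`. -/
noncomputable def hookLen (f : ℕ → ℕ) (i j : ℕ) : ℕ :=
  (f i - j - 1) + (Set.ncard {i' | j < f i'} - i - 1) + 1

/-- The `p`-weight of the partition `f`: the number of nodes of its diagram whose
hook length is divisible by `p` (this equals the number of one-step bead slides
relating the abacus of `f` to that of its `p`-core). -/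
noncomputable def pWeight (p : ℕ) (f : ℕ → ℕ) : ℕ :=
  Set.ncard {x : ℕ × ℕ | x.2 < f x.1 ∧ p ∣ hookLen f x.1 x.2}

namespace PWaux

lemma ranksum (F : Finset ℤ) :
    (∑ x ∈ F, (F.filter (· < x)).card) * 2 = F.card * (F.card - 1) := by
  induction F using Finset.induction_on with
  | empty => simp
  | @insert a F ha ih =>
    have h1 : ∀ x ∈ F, ((insert a F).filter (· < x)).card
        = (F.filter (· < x)).card + (if a < x then 1 else 0) := by
      intro x hx
      rw [Finset.filter_insert]
      split
      · rw [Finset.card_insert_of_notMem (by simp [ha])]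
      · simp
    have h2 : ((insert a F).filter (· < a)).card = (F.filter (· < a)).card := by
      rw [Finset.filter_insert]; simp
    have h3 : (∑ x ∈ F, if a < x then 1 else 0) = (F.filter (a < ·)).card :=
      (Finset.card_filter _ _).symm
    have h4 : (F.filter (a < ·)) = (F.filter (fun x => ¬ x < a)) := by
      apply Finset.filter_congr
      intro x hx
      have : x ≠ a := by rintro rfl; exact ha hx
      constructor <;> intro h <;> omega
    have h5 : (F.filter (· < a)).card + (F.filter (fun x => ¬ x < a)).card = F.card :=
      Finset.card_filter_add_card_filter_not _
    rw [Finset.sum_insert ha, Finset.sum_congr rfl h1, h2, Finset.sum_add_distrib, h3, h4,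
      Finset.card_insert_of_notMem ha]
    simp only [Nat.add_sub_cancel]
    cases hF : F.card with
    | zero =>
      have : F = ∅ := Finset.card_eq_zero.mp hF
      subst this; simp
    | succ n =>
      rw [hF] at ih h5
      simp only [Nat.succ_sub_one] at ih
      nlinarith [ih, h5]

end PWaux

namespace PWaux2
open scoped Classical

lemma card_split (F : Finset ℤ) {m1 m2 u : ℤ} (h1 : m1 < m2) (h : m2 < u) :
    (F.filter fun x => m1 < x ∧ x < u).card
      = (F.filter fun x => m1 < x ∧ x ≤ m2).card + (F.filter fun x => m2 < x ∧ x < u).card := by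
  have he : (F.filter fun x => m1 < x ∧ x < u)
      = (F.filter fun x => m1 < x ∧ x ≤ m2) ∪ (F.filter fun x => m2 < x ∧ x < u) := by
    ext x
    simp only [Finset.mem_filter, Finset.mem_union]
    constructor
    · rintro ⟨hx, h2, h3⟩
      by_cases hc : x ≤ m2
      · exact Or.inl ⟨hx, h2, hc⟩
      · exact Or.inr ⟨hx, by omega, h3⟩
    · rintro (⟨hx, h2, h3⟩ | ⟨hx, h2, h3⟩) <;> exact ⟨hx, by omega, by omega⟩
  rw [he, Finset.card_union_of_disjoint]
  rw [Finset.disjoint_left]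
  intro x hx hx'
  simp only [Finset.mem_filter] at hx hx'
  omega

lemma filter_le_split (F : Finset ℤ) {m a : ℤ} (haF : a ∈ F) (h : m < a) :
    (F.filter fun x => m < x ∧ x ≤ a).card = (F.filter fun x => m < x ∧ x < a).card + 1 := by
  have he : (F.filter fun x => m < x ∧ x ≤ a) = insert a (F.filter fun x => m < x ∧ x < a) := by
    ext x
    simp only [Finset.mem_filter, Finset.mem_insert]
    constructor
    · rintro ⟨hx, h2, h3⟩
      rcases eq_or_lt_of_le h3 with h4 | h4
      · exact Or.inl h4
      · exact Or.inr ⟨hx, h2, h4⟩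
    · rintro (rfl | ⟨hx, h2, h3⟩)
      · exact ⟨haF, h, le_refl _⟩
      · exact ⟨hx, h2, by omega⟩
  rw [he, Finset.card_insert_of_notMem (by simp only [Finset.mem_filter]; omega)]

lemma filter_mono_card (F : Finset ℤ) {m u v : ℤ} (h : u ≤ v) :
    (F.filter fun x => m < x ∧ x < u).card ≤ (F.filter fun x => m < x ∧ x < v).card := by
  apply Finset.card_le_card
  intro x hx
  simp only [Finset.mem_filter] at hx ⊢
  exact ⟨hx.1, hx.2.1, by omega⟩

lemma filter_erase_eq {F : Finset ℤ} {u : ℤ} {P : ℤ → Prop} [DecidablePred P] (h : ¬ P u) :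
    ((F.erase u).filter fun x => P x) = F.filter fun x => P x := by
  rw [Finset.filter_erase, Finset.erase_eq_of_notMem (by simp only [Finset.mem_filter]; tauto)]

/-- The set of "normal" removable positions among positions `Rem` (removables) and
`Add` (addables) on a runner. -/
noncomputable def NormSet (Rem Add : Finset ℤ) : Finset ℤ :=
  Rem.filter fun m => ∀ m' ∈ Add, m < m' →
    (Add.filter fun x => m < x ∧ x < m').card < (Rem.filter fun x => m < x ∧ x < m').card

lemma norm_ge {Rem Add : Finset ℤ} {m : ℤ} (hm : m ∈ NormSet Rem Add) (v : ℤ) :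
    (Add.filter fun x => m < x ∧ x < v).card ≤ (Rem.filter fun x => m < x ∧ x < v).card := by
  simp only [NormSet, Finset.mem_filter] at hm
  by_cases hne : (Add.filter fun x => m < x ∧ x < v).Nonempty
  · set u0 := (Add.filter fun x => m < x ∧ x < v).max' hne with hu0def
    have hu0 := (Add.filter fun x => m < x ∧ x < v).max'_mem hne
    rw [← hu0def] at hu0
    simp only [Finset.mem_filter] at hu0
    obtain ⟨hu0A, hmu0, hu0v⟩ := hu0
    have hnorm := hm.2 u0 hu0A hmu0
    have hsplit := card_split Add hmu0 hu0v (m1 := m)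
    have hup : (Add.filter fun x => u0 < x ∧ x < v).card = 0 := by
      rw [Finset.card_eq_zero, Finset.filter_eq_empty_iff]
      intro x hx
      intro hcon
      have hxle : x ≤ u0 := Finset.le_max' _ x (Finset.mem_filter.mpr ⟨hx, by omega, hcon.2⟩)
      omega
    have hle := filter_le_split Add hu0A hmu0
    have hR := filter_mono_card Rem (le_of_lt hu0v) (m := m)
    omega
  · rw [Finset.not_nonempty_iff_eq_empty] at hne
    rw [hne]
    simp

end PWaux2

namespace PWaux2

lemma two_fail {Rem Add' : Finset ℤ} (hd : Disjoint Rem Add') {u m1 m2 : ℤ}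
    (h12 : m1 < m2) (h2u : m2 < u)
    (hm1 : m1 ∈ NormSet Rem Add') (hm2 : m2 ∈ NormSet Rem Add')
    (hf1 : (Rem.filter fun x => m1 < x ∧ x < u).card ≤ (Add'.filter fun x => m1 < x ∧ x < u).card)
    (hf2 : (Rem.filter fun x => m2 < x ∧ x < u).card ≤ (Add'.filter fun x => m2 < x ∧ x < u).card) :
    False := by
  have hm2R : m2 ∈ Rem := (Finset.mem_filter.mp hm2).1
  have hm2A : m2 ∉ Add' := Finset.disjoint_left.mp hd hm2R
  have heq2 : (Add'.filter fun x => m2 < x ∧ x < u).card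
      = (Rem.filter fun x => m2 < x ∧ x < u).card := le_antisymm (norm_ge hm2 u) hf2
  have hRs := card_split Rem h12 h2u (m1 := m1)
  have hAs := card_split Add' h12 h2u (m1 := m1)
  have hRle := filter_le_split Rem hm2R h12
  have hAle : (Add'.filter fun x => m1 < x ∧ x ≤ m2).card
      = (Add'.filter fun x => m1 < x ∧ x < m2).card := by
    congr 1
    ext x
    simp only [Finset.mem_filter]
    constructor
    · rintro ⟨hx, h, h'⟩
      have hxm2 : x ≠ m2 := fun hh => hm2A (hh ▸ hx)
      exact ⟨hx, h, by omega⟩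
    · rintro ⟨hx, h, h'⟩
      exact ⟨hx, h, by omega⟩
  -- so cardA'(m1,m2) ≥ cardR(m1,m2) + 1, in particular nonempty
  have hne : (Add'.filter fun x => m1 < x ∧ x < m2).Nonempty := by
    rw [← Finset.card_pos]
    omega
  set a := (Add'.filter fun x => m1 < x ∧ x < m2).max' hne with hadef
  have hamem : a ∈ (Add'.filter fun x => m1 < x ∧ x < m2) := Finset.max'_mem _ hne
  simp only [Finset.mem_filter] at hamem
  obtain ⟨haA, hm1a, ham2⟩ := hamem
  have hnorm := (Finset.mem_filter.mp hm1).2 a haA hm1a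
  have hAs2 := card_split Add' hm1a ham2 (m1 := m1)
  have hup : (Add'.filter fun x => a < x ∧ x < m2).card = 0 := by
    rw [Finset.card_eq_zero, Finset.filter_eq_empty_iff]
    intro x hx hcon
    have hxle : x ≤ a := Finset.le_max' _ x (Finset.mem_filter.mpr ⟨hx, by omega, hcon.2⟩)
    omega
  have hle := filter_le_split Add' haA hm1a
  have hRmono := filter_mono_card Rem (le_of_lt ham2) (m := m1)
  omega

end PWaux2

namespace PWaux2

lemma matching_aux : ∀ (n : ℕ) (Rem Add : Finset ℤ), (Rem ∪ Add).card = n → Disjoint Rem Add →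
    Rem.card ≤ Add.card + (NormSet Rem Add).card := by
  intro n
  induction n using Nat.strong_induction_on with
  | _ n ih =>
    intro Rem Add hn hd
    rcases Finset.eq_empty_or_nonempty (Rem ∪ Add) with hU | hU
    · have hRe : Rem = ∅ := (Finset.union_eq_empty.mp hU).1
      simp [hRe]
    · have humem : (Rem ∪ Add).max' hU ∈ Rem ∪ Add := Finset.max'_mem _ hU
      set u := (Rem ∪ Add).max' hU with hudef
      have hmax : ∀ x ∈ Rem ∪ Add, x ≤ u := fun x hx => Finset.le_max' _ x hx
      have hmaxR : ∀ x ∈ Rem, x ≤ u := fun x hx => hmax x (Finset.mem_union_left _ hx)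
      have hmaxA : ∀ x ∈ Add, x ≤ u := fun x hx => hmax x (Finset.mem_union_right _ hx)
      rcases Finset.mem_union.mp humem with huR | huA
      · -- u is a removable: it is normal, recurse on Rem.erase u
        have huA : u ∉ Add := Finset.disjoint_left.mp hd huR
        have hcount : ∀ m (m' : ℤ), m' ∈ Add →
            ((Rem.erase u).filter fun x => m < x ∧ x < m')
              = (Rem.filter fun x => m < x ∧ x < m') := by
          intro m m' hm'
          apply filter_erase_eq
          have := hmaxA m' hm'
          omega
        have hNS : NormSet Rem Add = insert u (NormSet (Rem.erase u) Add) := by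
          ext m
          simp only [NormSet, Finset.mem_filter, Finset.mem_insert, Finset.mem_erase]
          constructor
          · rintro ⟨hmR, hcond⟩
            by_cases hmu : m = u
            · exact Or.inl hmu
            · refine Or.inr ⟨⟨hmu, hmR⟩, ?_⟩
              intro m' hm' hmm'
              rw [hcount m m' hm']
              exact hcond m' hm' hmm'
          · rintro (rfl | ⟨⟨hmu, hmR⟩, hcond⟩)
            · exact ⟨huR, fun m' hm' hum' => absurd (hmaxA m' hm') (by omega)⟩
            · refine ⟨hmR, fun m' hm' hmm' => ?_⟩
              have h2 := hcond m' hm' hmm'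
              rwa [hcount m m' hm'] at h2
        have hun : Rem.erase u ∪ Add = (Rem ∪ Add).erase u := by
          ext x
          simp only [Finset.mem_union, Finset.mem_erase]
          constructor
          · rintro (⟨hxu, hxR⟩ | hxA)
            · exact ⟨hxu, Or.inl hxR⟩
            · exact ⟨fun h => huA (h ▸ hxA), Or.inr hxA⟩
          · rintro ⟨hxu, hx | hx⟩
            · exact Or.inl ⟨hxu, hx⟩
            · exact Or.inr hx
        have hlt : (Rem.erase u ∪ Add).card < n := by
          rw [hun, ← hn]
          exact Finset.card_erase_lt_of_mem humem
        have ihh := ih _ hlt (Rem.erase u) Add rfl (hd.mono_left (Finset.erase_subset _ _))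
        have h1 : Rem.card = (Rem.erase u).card + 1 := by
          rw [Finset.card_erase_of_mem huR]
          have : 0 < Rem.card := Finset.card_pos.mpr ⟨u, huR⟩
          omega
        have h2 : u ∉ NormSet (Rem.erase u) Add := fun h => by
          have h3 := (Finset.mem_filter.mp h).1
          exact (Finset.mem_erase.mp h3).1 rfl
        rw [hNS, Finset.card_insert_of_notMem h2]
        omega
      · -- u is an addable: recurse on Add.erase u; at most one normal is lost
        have huR : u ∉ Rem := fun h => (Finset.disjoint_left.mp hd h) huA
        have hcount : ∀ m (m' : ℤ), m' < u →
            ((Add.erase u).filter fun x => m < x ∧ x < m')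
              = (Add.filter fun x => m < x ∧ x < m') := by
          intro m m' h
          apply filter_erase_eq
          omega
        have hcountu : ∀ m : ℤ,
            ((Add.erase u).filter fun x => m < x ∧ x < u)
              = (Add.filter fun x => m < x ∧ x < u) := by
          intro m
          apply filter_erase_eq
          omega
        have hX : NormSet Rem Add = (NormSet Rem (Add.erase u)).filter
            (fun m => ((Add.erase u).filter fun x => m < x ∧ x < u).card
              < (Rem.filter fun x => m < x ∧ x < u).card) := by
          ext m
          simp only [NormSet, Finset.mem_filter, Finset.mem_erase]
          constructor
          · rintro ⟨hmR, hcond⟩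
            have hmu : m < u := by
              have h3 := hmaxR m hmR
              have h4 : m ≠ u := fun h => huR (h ▸ hmR)
              omega
            refine ⟨⟨hmR, ?_⟩, ?_⟩
            · intro m' hm' hmm'
              obtain ⟨hm'u, hm'A⟩ := hm'
              have hm'lt : m' < u := by
                have := hmaxA m' hm'A
                omega
              rw [hcount m m' hm'lt]
              exact hcond m' hm'A hmm'
            · rw [hcountu m]
              exact hcond u huA hmu
          · rintro ⟨⟨hmR, hcond⟩, hextra⟩
            refine ⟨hmR, ?_⟩
            intro m' hm' hmm'
            by_cases hm'u : m' = u
            · subst hm'u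
              rwa [hcountu m] at hextra
            · have hm'lt : m' < u := by
                have := hmaxA m' hm'
                omega
              rw [← hcount m m' hm'lt]
              exact hcond m' ⟨hm'u, hm'⟩ hmm'
        have hd' : Disjoint Rem (Add.erase u) := hd.mono_right (Finset.erase_subset _ _)
        have hfail : ((NormSet Rem (Add.erase u)) \ NormSet Rem Add).card ≤ 1 := by
          rw [hX, ← Finset.filter_not]
          rw [Finset.card_le_one]
          intro a ha b hb
          simp only [Finset.mem_filter, not_lt] at ha hb
          by_contra hab
          have hau : a < u := by
            have h3 := hmaxR a (Finset.mem_filter.mp ha.1).1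
            have h4 : a ≠ u := fun h => huR (h ▸ (Finset.mem_filter.mp ha.1).1)
            omega
          have hbu : b < u := by
            have h3 := hmaxR b (Finset.mem_filter.mp hb.1).1
            have h4 : b ≠ u := fun h => huR (h ▸ (Finset.mem_filter.mp hb.1).1)
            omega
          rcases lt_trichotomy a b with h | h | h
          · exact two_fail hd' h hbu ha.1 hb.1 ha.2 hb.2
          · exact hab h
          · exact two_fail hd' h hau hb.1 ha.1 hb.2 ha.2
        have hun : Rem ∪ Add.erase u = (Rem ∪ Add).erase u := by
          ext x
          simp only [Finset.mem_union, Finset.mem_erase]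
          constructor
          · rintro (hxR | ⟨hxu, hxA⟩)
            · exact ⟨fun h => huR (h ▸ hxR), Or.inl hxR⟩
            · exact ⟨hxu, Or.inr hxA⟩
          · rintro ⟨hxu, hx | hx⟩
            · exact Or.inl hx
            · exact Or.inr ⟨hxu, hx⟩
        have hlt : (Rem ∪ Add.erase u).card < n := by
          rw [hun, ← hn]
          exact Finset.card_erase_lt_of_mem humem
        have ihh := ih _ hlt Rem (Add.erase u) rfl hd'
        have hsd : (NormSet Rem (Add.erase u)).card
            ≤ ((NormSet Rem (Add.erase u)) \ NormSet Rem Add).card + (NormSet Rem Add).card := by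
          rw [← Finset.card_sdiff_add_card_inter (NormSet Rem (Add.erase u)) (NormSet Rem Add)]
          have : ((NormSet Rem (Add.erase u)) ∩ NormSet Rem Add).card ≤ (NormSet Rem Add).card :=
            Finset.card_le_card (Finset.inter_subset_right)
          omega
        have hac : Add.card = (Add.erase u).card + 1 := by
          rw [Finset.card_erase_of_mem huA]
          have : 0 < Add.card := Finset.card_pos.mpr ⟨u, huA⟩
          omega
        omega

lemma matching (Rem Add : Finset ℤ) (hd : Disjoint Rem Add) :
    Rem.card ≤ Add.card + (NormSet Rem Add).card :=
  matching_aux _ Rem Add rfl hd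

end PWaux2

namespace PWaux2

/-- Pairs (bead, gap below it) of a bead configuration `S` on a single runner. -/
def InvSet (S : Set ℤ) : Set (ℤ × ℤ) := {y | y.1 ∈ S ∧ y.2 ∉ S ∧ y.2 < y.1}

lemma inv_card (S : Set ℤ) (t : ℤ) (hlo : ∀ m : ℤ, m < t → m ∈ S) (F : Finset ℤ)
    (hF : ∀ m : ℤ, m ∈ F ↔ m ∈ S ∧ t ≤ m) :
    (InvSet S).Finite ∧
      ((InvSet S).ncard : ℤ) * 2 = (∑ x ∈ F, (x - t)) * 2 - (F.card : ℤ) * ((F.card : ℤ) - 1) := by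
  classical
  set PF : Finset (ℤ × ℤ) :=
    F.biUnion (fun x => ((Finset.Ico t x).filter (fun y => y ∉ S)).image (fun y => (x, y)))
    with hPF
  have hset : InvSet S = ↑PF := by
    ext ⟨a, b⟩
    simp only [InvSet, Set.mem_setOf_eq, hPF, Finset.coe_biUnion, Set.mem_iUnion,
      Finset.mem_coe, Finset.mem_image, Finset.mem_filter, Finset.mem_Ico]
    constructor
    · rintro ⟨haS, hbS, hba⟩
      have htb : t ≤ b := by
        by_contra h
        exact hbS (hlo b (by omega))
      refine ⟨a, (hF a).mpr ⟨haS, by omega⟩, b, ⟨⟨htb, hba⟩, hbS⟩, rfl⟩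
    · rintro ⟨x, hx, y, ⟨⟨hty, hyx⟩, hyS⟩, heq⟩
      injection heq with h1 h2
      subst h1
      subst h2
      exact ⟨((hF x).mp hx).1, hyS, hyx⟩
  have hfin : (InvSet S).Finite := by rw [hset]; exact PF.finite_toSet
  refine ⟨hfin, ?_⟩
  have hcard : (InvSet S).ncard = PF.card := by rw [hset, Set.ncard_coe_finset]
  have hdisj : ∀ x ∈ F, ∀ y ∈ F, x ≠ y →
      Disjoint (((Finset.Ico t x).filter (fun y => y ∉ S)).image (fun y => (x, y)))
        (((Finset.Ico t y).filter (fun y' => y' ∉ S)).image (fun y' => (y, y'))) := by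
    intro x _ y _ hxy
    rw [Finset.disjoint_left]
    rintro ⟨a, b⟩ ha hb
    simp only [Finset.mem_image] at ha hb
    obtain ⟨_, _, h1⟩ := ha
    obtain ⟨_, _, h2⟩ := hb
    exact hxy ((congrArg Prod.fst h1).trans (congrArg Prod.fst h2).symm)
  have hPFcard : PF.card = ∑ x ∈ F, ((Finset.Ico t x).filter (fun y => y ∉ S)).card := by
    rw [hPF, Finset.card_biUnion hdisj]
    refine Finset.sum_congr rfl fun x _ => ?_
    exact Finset.card_image_of_injective _ (fun a b h => congrArg Prod.snd h)
  have hrank : ∀ x ∈ F, ((Finset.Ico t x).filter (fun y => y ∈ S)) = F.filter (· < x) := by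
    intro x _
    ext y
    simp only [Finset.mem_filter, Finset.mem_Ico, hF]
    constructor
    · rintro ⟨⟨h1, h2⟩, h3⟩; exact ⟨⟨h3, h1⟩, h2⟩
    · rintro ⟨⟨h1, h2⟩, h3⟩; exact ⟨⟨h2, h3⟩, h1⟩
  have hsum : ∀ x ∈ F, (((Finset.Ico t x).filter (fun y => y ∉ S)).card : ℤ)
      = (x - t) - ((F.filter (· < x)).card : ℤ) := by
    intro x hx
    have h1 : ((Finset.Ico t x).filter (fun y => y ∈ S)).card
        + ((Finset.Ico t x).filter (fun y => y ∉ S)).card = (Finset.Ico t x).card :=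
      Finset.card_filter_add_card_filter_not _
    have h2 : (Finset.Ico t x).card = (x - t).toNat := Int.card_Ico t x ▸ rfl
    have h3 : t ≤ x := ((hF x).mp hx).2
    rw [hrank x hx] at h1
    have h4 : ((x - t).toNat : ℤ) = x - t := Int.toNat_of_nonneg (by omega)
    omega
  have hgauss := PWaux.ranksum F
  have hcast : ((∑ x ∈ F, (F.filter (· < x)).card : ℕ) : ℤ) * 2
      = (F.card : ℤ) * ((F.card : ℤ) - 1) := by
    rcases Nat.eq_zero_or_pos F.card with h | h
    · rw [Finset.card_eq_zero.mp h] at hgauss ⊢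
      simpa using hgauss
    · have : ((F.card * (F.card - 1) : ℕ) : ℤ) = (F.card : ℤ) * ((F.card : ℤ) - 1) := by
        push_cast [Nat.cast_sub h]
        ring
      rw [← this, ← hgauss]
      push_cast
      ring
  have : (PF.card : ℤ) = ∑ x ∈ F, ((x - t) - ((F.filter (· < x)).card : ℤ)) := by
    rw [hPFcard]
    push_cast
    exact Finset.sum_congr rfl hsum
  rw [hcard, this, Finset.sum_sub_distrib]
  push_cast at hcast ⊢
  linarith [hcast]

end PWaux2

namespace PWaux2

lemma energy_le (S R : Set ℤ) (N FS FR : Finset ℤ) (t : ℤ)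
    (hSlo : ∀ m : ℤ, m < t → m ∈ S) (hRlo : ∀ m : ℤ, m < t → m ∈ R)
    (hFS : ∀ m : ℤ, m ∈ FS ↔ m ∈ S ∧ t ≤ m) (hFR : ∀ m : ℤ, m ∈ FR ↔ m ∈ R ∧ t ≤ m)
    (hNS : ∀ m ∈ N, m ∈ S) (hNR : ∀ m ∈ N, m ∉ R) (hNt : ∀ m ∈ N, t ≤ m)
    (hk : FS.card ≤ FR.card + N.card) :
    (InvSet (S \ ↑N)).ncard + (InvSet (R ∪ ↑N)).ncard ≤ (InvSet S).ncard + (InvSet R).ncard := by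
  classical
  have hNFS : N ⊆ FS := fun m hm => (hFS m).mpr ⟨hNS m hm, hNt m hm⟩
  have hNFR : Disjoint N FR := by
    rw [Finset.disjoint_left]
    intro m hm hm'
    exact hNR m hm ((hFR m).mp hm').1
  have hS'lo : ∀ m : ℤ, m < t → m ∈ S \ ↑N := by
    intro m hm
    exact ⟨hSlo m hm, fun h => by have := hNt m h; omega⟩
  have hR'lo : ∀ m : ℤ, m < t → m ∈ R ∪ ↑N := fun m hm => Or.inl (hRlo m hm)
  have hFS' : ∀ m : ℤ, m ∈ FS \ N ↔ m ∈ S \ ↑N ∧ t ≤ m := by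
    intro m
    simp only [Finset.mem_sdiff, hFS, Set.mem_diff, Finset.mem_coe]
    tauto
  have hFR' : ∀ m : ℤ, m ∈ FR ∪ N ↔ m ∈ R ∪ ↑N ∧ t ≤ m := by
    intro m
    simp only [Finset.mem_union, hFR, Set.mem_union, Finset.mem_coe]
    constructor
    · rintro (⟨h1, h2⟩ | h)
      · exact ⟨Or.inl h1, h2⟩
      · exact ⟨Or.inr h, hNt m h⟩
    · rintro ⟨h1 | h1, h2⟩
      · exact Or.inl ⟨h1, h2⟩
      · exact Or.inr h1
  obtain ⟨hf1, he1⟩ := inv_card S t hSlo FS hFS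
  obtain ⟨hf2, he2⟩ := inv_card R t hRlo FR hFR
  obtain ⟨hf3, he3⟩ := inv_card (S \ ↑N) t hS'lo (FS \ N) hFS'
  obtain ⟨hf4, he4⟩ := inv_card (R ∪ ↑N) t hR'lo (FR ∪ N) hFR'
  have hsum1 : ∑ x ∈ FS \ N, (x - t) = (∑ x ∈ FS, (x - t)) - ∑ x ∈ N, (x - t) := by
    rw [eq_sub_iff_add_eq, Finset.sum_sdiff hNFS]
  have hsum2 : ∑ x ∈ FR ∪ N, (x - t) = (∑ x ∈ FR, (x - t)) + ∑ x ∈ N, (x - t) := by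
    rw [Finset.sum_union hNFR.symm]
  have hc1 : (FS \ N).card = FS.card - N.card := Finset.card_sdiff_of_subset hNFS
  have hc2 : (FR ∪ N).card = FR.card + N.card := by
    rw [Finset.card_union_of_disjoint hNFR.symm]
  have hkS : N.card ≤ FS.card := Finset.card_le_card hNFS
  -- cast everything to ℤ and conclude with nlinarith
  have hcast1 : ((FS \ N).card : ℤ) = (FS.card : ℤ) - N.card := by
    rw [hc1]; omega
  have hcast2 : ((FR ∪ N).card : ℤ) = (FR.card : ℤ) + N.card := by
    rw [hc2]; omega
  have hgoal : ((InvSet (S \ ↑N)).ncard : ℤ) * 2 + ((InvSet (R ∪ ↑N)).ncard : ℤ) * 2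
      ≤ ((InvSet S).ncard : ℤ) * 2 + ((InvSet R).ncard : ℤ) * 2 := by
    rw [he1, he2, he3, he4, hcast1, hcast2, hsum1, hsum2]
    have hkk : (FS.card : ℤ) ≤ (FR.card : ℤ) + N.card := by exact_mod_cast hk
    have hkk2 : (N.card : ℤ) ≤ FS.card := by exact_mod_cast hkS
    have hNn : (0 : ℤ) ≤ N.card := Int.natCast_nonneg _
    nlinarith [hkk, hkk2, hNn]
  omega

end PWaux2

namespace PWaux2

noncomputable def bet (f : ℕ → ℕ) (i : ℕ) : ℤ := (f i : ℤ) - i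

def Bset (f : ℕ → ℕ) : Set ℤ := Set.range (bet f)

noncomputable def colN (f : ℕ → ℕ) (j : ℕ) : ℕ := sInf {i | f i ≤ j}

noncomputable def cmap (f : ℕ → ℕ) (j : ℕ) : ℤ := (j : ℤ) + 1 - colN f j

variable {f : ℕ → ℕ}

lemma bet_strictAnti (hf : Antitone f) : StrictAnti (bet f) := by
  intro i j hij
  have := hf (le_of_lt hij)
  simp only [bet]
  omega

lemma colN_spec (hz : ∃ n, f n = 0) (j : ℕ) : f (colN f j) ≤ j := by
  obtain ⟨n, hn⟩ := hz
  exact Nat.sInf_mem (⟨n, by simp [hn]⟩ : {i | f i ≤ j}.Nonempty)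

lemma lt_colN_iff (hf : Antitone f) (hz : ∃ n, f n = 0) (j i : ℕ) :
    i < colN f j ↔ j < f i := by
  constructor
  · intro h
    by_contra hcon
    have hle : colN f j ≤ i := Nat.sInf_le (show f i ≤ j by omega)
    omega
  · intro h
    by_contra hcon
    have h2 : f i ≤ f (colN f j) := hf (by omega)
    have h3 := colN_spec hz j
    omega

lemma ncard_col (hf : Antitone f) (hz : ∃ n, f n = 0) (j : ℕ) :
    Set.ncard {i' | j < f i'} = colN f j := by
  have hset : {i' | j < f i'} = ↑(Finset.range (colN f j)) := by
    ext i
    simp only [Set.mem_setOf_eq, Finset.coe_range, Set.mem_Iio]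
    exact (lt_colN_iff hf hz j i).symm
  rw [hset, Set.ncard_coe_finset, Finset.card_range]

lemma colN_anti (hz : ∃ n, f n = 0) {j j' : ℕ} (h : j ≤ j') : colN f j' ≤ colN f j :=
  Nat.sInf_le (by simpa using le_trans (colN_spec hz j) h)

lemma low_mem_Bset (hf : Antitone f) (hz : ∃ n, f n = 0) {c : ℤ}
    (hc : c ≤ -(colN f 0 : ℤ)) : c ∈ Bset f := by
  have hc0 : c ≤ 0 := le_trans hc (by omega)
  refine ⟨(-c).toNat, ?_⟩
  have hi : ((-c).toNat : ℤ) = -c := Int.toNat_of_nonneg (by omega)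
  have hcol : colN f 0 ≤ (-c).toNat := by omega
  have hfz : f ((-c).toNat) = 0 := by
    have := hf hcol
    have h2 := colN_spec hz 0
    omega
  simp only [bet, hfz]
  omega

lemma Bset_Ici_finite (hf : Antitone f) (c : ℤ) : (Bset f ∩ Set.Ici c).Finite := by
  have hsub : Bset f ∩ Set.Ici c ⊆ bet f '' (Set.Iic ((f 0 : ℤ) - c).toNat) := by
    rintro x ⟨⟨i, rfl⟩, hx⟩
    refine ⟨i, ?_, rfl⟩
    simp only [Set.mem_Iic]
    have h2 : f i ≤ f 0 := hf (Nat.zero_le i)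
    simp only [bet, Set.mem_Ici] at hx
    omega
  exact Set.Finite.subset ((Set.finite_Iic _).image _) hsub

lemma hook_cast (hf : Antitone f) (hz : ∃ n, f n = 0) {i j : ℕ} (hij : j < f i) :
    (hookLen f i j : ℤ) = bet f i - cmap f j := by
  have h1 : i < colN f j := (lt_colN_iff hf hz j i).mpr hij
  simp only [hookLen, bet, cmap, ncard_col hf hz]
  omega

lemma cmap_not_mem (hf : Antitone f) (hz : ∃ n, f n = 0) (j : ℕ) :
    cmap f j ∉ Bset f := by
  rintro ⟨i, hi⟩
  have hi' : (f i : ℤ) - i = (j : ℤ) + 1 - colN f j := hi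
  clear hi
  rcases lt_or_ge j (f i) with h | h
  · have h1 : i < colN f j := (lt_colN_iff hf hz j i).mpr h
    omega
  · have h1 : ¬ (i < colN f j) := fun hc => by have := (lt_colN_iff hf hz j i).mp hc; omega
    omega

lemma cmap_strictMono (hz : ∃ n, f n = 0) : StrictMono (cmap f) := by
  apply strictMono_nat_of_lt_succ
  intro j
  have := colN_anti hz (show j ≤ j + 1 by omega) (f := f)
  simp only [cmap]
  push_cast
  omega

lemma cmap_lt (hf : Antitone f) (hz : ∃ n, f n = 0) {i j : ℕ} (hij : j < f i) :
    cmap f j < bet f i := by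
  have h1 : i < colN f j := (lt_colN_iff hf hz j i).mpr hij
  simp only [bet, cmap]
  omega

lemma cmap_skip (hf : Antitone f) (hz : ∃ n, f n = 0) {j : ℕ} {c : ℤ}
    (h1 : cmap f j < c) (h2 : c < cmap f (j + 1)) : c ∈ Bset f := by
  simp only [cmap] at h1 h2
  push_cast at h2
  have hcle : c ≤ (j : ℤ) + 1 := by omega
  set i' := ((j : ℤ) + 1 - c).toNat with hi'def
  have hi' : (i' : ℤ) = (j : ℤ) + 1 - c := Int.toNat_of_nonneg (by omega)
  have hup : colN f (j + 1) ≤ i' := by omega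
  have hlow : i' < colN f j := by omega
  have hfle : f i' ≤ j + 1 := by
    have := hf hup
    have h3 := colN_spec hz (j + 1)
    omega
  have hfgt : j < f i' := (lt_colN_iff hf hz j i').mp hlow
  refine ⟨i', ?_⟩
  simp only [bet]
  omega

lemma cmap_surj (hf : Antitone f) (hz : ∃ n, f n = 0) {i : ℕ} {c : ℤ}
    (hc : c < bet f i) (hcB : c ∉ Bset f) : ∃ j, j < f i ∧ cmap f j = c := by
  have hex : ∃ j : ℕ, c < cmap f j := by
    refine ⟨(c + colN f 0).toNat, ?_⟩
    have h1 : ((c + colN f 0).toNat : ℤ) ≥ c + colN f 0 := Int.self_le_toNat _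
    have h2 : colN f ((c + colN f 0).toNat) ≤ colN f 0 := colN_anti hz (Nat.zero_le _)
    simp only [cmap]
    omega
  set j₀ := Nat.find hex with hj₀def
  have hj₀ : c < cmap f j₀ := Nat.find_spec hex
  have hj₀ne : j₀ ≠ 0 := by
    intro h
    apply hcB
    apply low_mem_Bset hf hz
    have : c < cmap f 0 := h ▸ hj₀
    simp only [cmap] at this
    omega
  obtain ⟨j, hj⟩ : ∃ j, j₀ = j + 1 := ⟨j₀ - 1, by omega⟩
  have hjle : cmap f j ≤ c := by
    have := Nat.find_min hex (m := j) (by omega)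
    omega
  have hceq : cmap f j = c := by
    rcases eq_or_lt_of_le hjle with h | h
    · exact h
    · exact absurd (cmap_skip hf hz h (hj ▸ hj₀)) hcB
  refine ⟨j, ?_, hceq⟩
  by_contra hcon
  have hcol : ¬ (i < colN f j) := fun hcc => by
    have := (lt_colN_iff hf hz j i).mp hcc
    omega
  simp only [cmap] at hceq
  simp only [bet] at hc
  omega

end PWaux2

namespace PWaux2

def PairSet (p : ℕ) (B : Set ℤ) : Set (ℤ × ℤ) :=
  {y | y.1 ∈ B ∧ y.2 ∉ B ∧ y.2 < y.1 ∧ (p : ℤ) ∣ y.1 - y.2}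

variable {f : ℕ → ℕ}

lemma exists_zero (hfin : (Function.support f).Finite) : ∃ n, f n = 0 := by
  by_contra h
  push_neg at h
  have : Function.support f = Set.univ := by
    ext x; simp [Function.mem_support, h x]
  rw [this] at hfin
  exact Set.infinite_univ hfin

lemma pweight_eq (p : ℕ) (hf : Antitone f) (hfin : (Function.support f).Finite) :
    pWeight p f = (PairSet p (Bset f)).ncard ∧ (PairSet p (Bset f)).Finite := by
  have hz := exists_zero hfin
  set NodeSet := {x : ℕ × ℕ | x.2 < f x.1 ∧ p ∣ hookLen f x.1 x.2} with hNdef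
  have hNfin : NodeSet.Finite := by
    apply Set.Finite.subset (Set.finite_Iio (colN f 0) |>.prod (Set.finite_Iio (f 0)))
    rintro ⟨a, b⟩ ⟨h1, _⟩
    have h1' : b < f a := h1
    constructor
    · exact (lt_colN_iff hf hz 0 a).mpr (by omega)
    · exact Set.mem_Iio.mpr (lt_of_lt_of_le h1' (hf (Nat.zero_le a)))
  have himg : (fun x : ℕ × ℕ => (bet f x.1, cmap f x.2)) '' NodeSet = PairSet p (Bset f) := by
    ext ⟨b, c⟩
    constructor
    · rintro ⟨⟨a, j⟩, ⟨hj, hdvd⟩, heq⟩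
      injection heq with h1 h2
      subst h1; subst h2
      refine ⟨⟨a, rfl⟩, cmap_not_mem hf hz j, cmap_lt hf hz hj, ?_⟩
      rw [← hook_cast hf hz hj]
      exact Int.natCast_dvd_natCast.mpr hdvd
    · rintro ⟨⟨a, rfl⟩, hcB, hlt, hdvd⟩
      obtain ⟨j, hj, rfl⟩ := cmap_surj hf hz hlt hcB
      refine ⟨(a, j), ⟨hj, ?_⟩, rfl⟩
      rw [← Int.natCast_dvd_natCast]
      rw [hook_cast hf hz hj]
      exact hdvd
  have hinj : Set.InjOn (fun x : ℕ × ℕ => (bet f x.1, cmap f x.2)) NodeSet := by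
    rintro ⟨a, j⟩ _ ⟨a', j'⟩ _ heq
    injection heq with h1 h2
    have ha : a = a' := (bet_strictAnti hf).injective h1
    have hj : j = j' := (cmap_strictMono hz).injective h2
    simp [ha, hj]
  constructor
  · show NodeSet.ncard = _
    rw [← himg, Set.ncard_image_of_injOn hinj]
  · rw [← himg]
    exact hNfin.image _

lemma bet_sub_one_mem (hf : Antitone f) (i : ℕ) :
    bet f i - 1 ∈ Bset f ↔ f (i + 1) = f i := by
  constructor
  · rintro ⟨j, hj⟩
    have hanti := bet_strictAnti hf
    rcases lt_trichotomy j (i + 1) with h | h | h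
    · have hji : j ≤ i := by omega
      have : bet f i ≤ bet f j := hanti.antitone hji
      omega
    · subst h
      have : (f (i + 1) : ℤ) - (i + 1) = (f i : ℤ) - i - 1 := hj
      omega
    · have h2 : bet f j < bet f (i + 1) := hanti h
      have h3 : bet f (i + 1) ≤ bet f i - 1 := by
        have := hf (show i ≤ i + 1 by omega)
        simp only [bet]
        push_cast
        omega
      omega
  · intro h
    refine ⟨i + 1, ?_⟩
    simp only [bet, h]
    push_cast
    omega

lemma bet_add_one_mem (hf : Antitone f) (i : ℕ) :
    bet f i + 1 ∈ Bset f ↔ (i ≠ 0 ∧ f (i - 1) = f i) := by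
  constructor
  · rintro ⟨j, hj⟩
    have hanti := bet_strictAnti hf
    have hine : i ≠ 0 := by
      rintro rfl
      rcases Nat.eq_zero_or_pos j with rfl | hj0
      · simp only [bet] at hj; omega
      · have : bet f j < bet f 0 := hanti hj0
        omega
    refine ⟨hine, ?_⟩
    rcases lt_trichotomy j (i - 1) with h | h | h
    · have h2 : bet f (i - 1) < bet f j := hanti h
      have h3 : bet f i + 1 ≤ bet f (i - 1) := by
        have := hf (show i - 1 ≤ i by omega)
        have hii : i - 1 + 1 = i := by omega
        simp only [bet]
        omega
      omega
    · subst h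
      have : (f (i - 1) : ℤ) - (i - 1 : ℕ) = (f i : ℤ) - i + 1 := hj
      omega
    · have hji : i ≤ j := by omega
      have : bet f j ≤ bet f i := hanti.antitone hji
      omega
  · rintro ⟨hine, h⟩
    refine ⟨i - 1, ?_⟩
    simp only [bet, h]
    have hii : ((i - 1 : ℕ) : ℤ) = (i : ℤ) - 1 := by omega
    omega

end PWaux2

namespace PWaux2

lemma dvd_iff_cast (p : ℕ) (a b : ℤ) :
    (p : ℤ) ∣ a - b ↔ ((a : ZMod p) = (b : ZMod p)) := by
  rw [ZMod.intCast_eq_intCast_iff, Int.modEq_iff_dvd]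
  exact dvd_sub_comm

lemma bet_cast {f : ℕ → ℕ} (p : ℕ) (i : ℕ) :
    ((bet f i : ℤ) : ZMod p) = (f i : ZMod p) - (i : ZMod p) := by
  simp only [bet]
  push_cast
  ring

variable {f : ℕ → ℕ}

lemma hasRemovable_iff (p : ℕ) (r : ZMod p) (hf : Antitone f) (i : ℕ) :
    HasRemovable p r f i ↔
      (bet f i - 1 ∉ Bset f ∧ ((bet f i : ℤ) : ZMod p) = r + 1) := by
  rw [HasRemovable]
  have hle : f (i + 1) ≤ f i := hf (by omega)
  have hmem := bet_sub_one_mem hf i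
  constructor
  · rintro ⟨hlt, hres⟩
    have h1 : (1 : ℕ) ≤ f i := by omega
    rw [Nat.cast_sub h1, Nat.cast_one] at hres
    refine ⟨fun hc => by have := hmem.mp hc; omega, ?_⟩
    rw [bet_cast]
    linear_combination hres
  · rintro ⟨hnm, hres⟩
    have hlt : f (i + 1) < f i := by
      rcases eq_or_lt_of_le hle with h | h
      · exact absurd (hmem.mpr h) hnm
      · exact h
    have h1 : (1 : ℕ) ≤ f i := by omega
    refine ⟨hlt, ?_⟩
    rw [Nat.cast_sub h1, Nat.cast_one]
    rw [bet_cast] at hres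
    linear_combination hres

lemma hasAddable_iff (p : ℕ) (r : ZMod p) (hf : Antitone f) (i : ℕ) :
    HasAddable p r f i ↔
      (bet f i + 1 ∉ Bset f ∧ ((bet f i : ℤ) : ZMod p) = r) := by
  rw [HasAddable]
  have hmem := bet_add_one_mem hf i
  constructor
  · rintro ⟨hcond, hres⟩
    refine ⟨fun hc => ?_, by rw [bet_cast]; exact hres⟩
    obtain ⟨hne, heq⟩ := hmem.mp hc
    rcases hcond with h | h
    · exact hne h
    · omega
  · rintro ⟨hnm, hres⟩
    refine ⟨?_, by rw [bet_cast] at hres; exact hres⟩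
    rcases Nat.eq_zero_or_pos i with h | h
    · exact Or.inl h
    · right
      have hle : f i ≤ f (i - 1) := hf (by omega)
      rcases eq_or_lt_of_le hle with h2 | h2
      · exact absurd (hmem.mpr ⟨by omega, h2.symm⟩) hnm
      · exact h2

lemma class_ncard (p : ℕ) (hp : 0 < p) (B : Set ℤ) (s : ℤ) :
    {y ∈ PairSet p B | (p : ℤ) ∣ y.1 - s}.ncard
      = (InvSet {m : ℤ | s + p * m ∈ B}).ncard := by
  have hp' : (0 : ℤ) < p := by exact_mod_cast hp
  have himg : (fun y : ℤ × ℤ => (s + p * y.1, s + p * y.2)) '' InvSet {m : ℤ | s + p * m ∈ B}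
      = {y ∈ PairSet p B | (p : ℤ) ∣ y.1 - s} := by
    apply Set.eq_of_subset_of_subset
    · rintro y ⟨⟨m, m'⟩, ⟨h1, h2, h3⟩, heq⟩
      subst heq
      have h1' : s + p * m ∈ B := h1
      have h2' : s + p * m' ∉ B := h2
      have h3' : m' < m := h3
      refine ⟨⟨h1', h2', ?_, ⟨m - m', by ring⟩⟩, ⟨m, by ring⟩⟩
      show s + p * m' < s + p * m
      nlinarith
    · rintro ⟨b, c⟩ ⟨⟨hb, hc, hlt, q, hq⟩, m, hm⟩
      have hb' : b ∈ B := hb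
      have hc' : c ∉ B := hc
      have hlt' : c < b := hlt
      have hq' : b - c = p * q := hq
      have hm' : b - s = p * m := hm
      have hbm : b = s + p * m := by linarith
      have hcm : c = s + p * (m - q) := by
        have : c = b - p * q := by linarith
        rw [this, hbm]; ring
      refine ⟨(m, m - q), ⟨?_, ?_, ?_⟩, ?_⟩
      · show s + p * m ∈ B
        rw [← hbm]; exact hb'
      · show s + p * (m - q) ∉ B
        rw [← hcm]; exact hc'
      · show m - q < m
        nlinarith
      · show (s + p * m, s + p * (m - q)) = (b, c)
        rw [← hbm, ← hcm]
  have hinj : Set.InjOn (fun y : ℤ × ℤ => (s + p * y.1, s + p * y.2))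
      (InvSet {m : ℤ | s + p * m ∈ B}) := by
    rintro ⟨a, b⟩ _ ⟨a', b'⟩ _ heq
    injection heq with e1 e2
    have e1' : s + p * a = s + p * a' := e1
    have e2' : s + p * b = s + p * b' := e2
    have ha : a = a' := by
      have : p * a = p * a' := by linarith
      exact mul_left_cancel₀ (by omega) this
    have hb : b = b' := by
      have : p * b = p * b' := by linarith
      exact mul_left_cancel₀ (by omega) this
    simp [ha, hb]
  rw [← himg, Set.ncard_image_of_injOn hinj]

lemma pairset_split (p : ℕ) (hp : 2 ≤ p) (B : Set ℤ) (s₀ : ℤ)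
    (hfin : (PairSet p B).Finite) :
    (PairSet p B).ncard = {y ∈ PairSet p B | (p : ℤ) ∣ y.1 - s₀}.ncard
      + {y ∈ PairSet p B | (p : ℤ) ∣ y.1 - (s₀ - 1)}.ncard
      + {y ∈ PairSet p B | ¬ (p : ℤ) ∣ y.1 - s₀ ∧ ¬ (p : ℤ) ∣ y.1 - (s₀ - 1)}.ncard := by
  have hnd : ∀ x : ℤ, ¬ ((p : ℤ) ∣ x - s₀ ∧ (p : ℤ) ∣ x - (s₀ - 1)) := by
    rintro x ⟨h1, h2⟩
    have : (p : ℤ) ∣ 1 := by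
      have := Int.dvd_sub h2 h1
      simpa using this
    have := Int.le_of_dvd (by omega) this
    omega
  have hsplit : PairSet p B
      = ({y ∈ PairSet p B | (p : ℤ) ∣ y.1 - s₀}
        ∪ {y ∈ PairSet p B | (p : ℤ) ∣ y.1 - (s₀ - 1)})
        ∪ {y ∈ PairSet p B | ¬ (p : ℤ) ∣ y.1 - s₀ ∧ ¬ (p : ℤ) ∣ y.1 - (s₀ - 1)} := by
    ext y
    simp only [Set.mem_union, Set.mem_setOf_eq]
    by_cases h1 : (p : ℤ) ∣ y.1 - s₀ <;> by_cases h2 : (p : ℤ) ∣ y.1 - (s₀ - 1) <;> tauto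
  have hd1 : Disjoint {y ∈ PairSet p B | (p : ℤ) ∣ y.1 - s₀}
      {y ∈ PairSet p B | (p : ℤ) ∣ y.1 - (s₀ - 1)} := by
    rw [Set.disjoint_left]
    rintro y ⟨_, h1⟩ ⟨_, h2⟩
    exact hnd y.1 ⟨h1, h2⟩
  have hd2 : Disjoint ({y ∈ PairSet p B | (p : ℤ) ∣ y.1 - s₀}
        ∪ {y ∈ PairSet p B | (p : ℤ) ∣ y.1 - (s₀ - 1)})
      {y ∈ PairSet p B | ¬ (p : ℤ) ∣ y.1 - s₀ ∧ ¬ (p : ℤ) ∣ y.1 - (s₀ - 1)} := by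
    rw [Set.disjoint_left]
    rintro y (⟨_, h1⟩ | ⟨_, h1⟩) ⟨_, h2, h3⟩ <;> tauto
  have hf1 : {y ∈ PairSet p B | (p : ℤ) ∣ y.1 - s₀}.Finite :=
    hfin.subset (Set.sep_subset _ _)
  have hf2 : {y ∈ PairSet p B | (p : ℤ) ∣ y.1 - (s₀ - 1)}.Finite :=
    hfin.subset (Set.sep_subset _ _)
  have hf3 : {y ∈ PairSet p B | ¬ (p : ℤ) ∣ y.1 - s₀ ∧ ¬ (p : ℤ) ∣ y.1 - (s₀ - 1)}.Finite :=
    hfin.subset (Set.sep_subset _ _)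
  conv_lhs => rw [hsplit]
  rw [Set.ncard_union_eq hd2 (hf1.union hf2) hf3, Set.ncard_union_eq hd1 hf1 hf2]

end PWaux2

namespace PWaux2

variable {f : ℕ → ℕ}

lemma countRem (hf : Antitone f) {p : ℕ} (hp : 2 ≤ p) (r : ZMod p)
    (s₀ : ℤ) (hs₀ : ((s₀ : ℤ) : ZMod p) = r + 1) (RemF : Finset ℤ)
    (hRemF : ∀ x : ℤ, x ∈ RemF ↔ (s₀ + p * x ∈ Bset f ∧ s₀ - 1 + p * x ∉ Bset f))
    {i i' : ℕ} {m m' : ℤ} (hi : bet f i = s₀ + p * m) (hi' : bet f i' = s₀ - 1 + p * m') :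
    {i'' | i' < i'' ∧ i'' < i ∧ HasRemovable p r f i''}.ncard
      = (RemF.filter fun x => m < x ∧ x < m').card := by
  have hpz : (0 : ℤ) < p := by exact_mod_cast (by omega : 0 < p)
  have hp2 : (2 : ℤ) ≤ p := by exact_mod_cast hp
  set T := {i'' | i' < i'' ∧ i'' < i ∧ HasRemovable p r f i''} with hT
  have himg : bet f '' T = (fun x : ℤ => s₀ + p * x) '' ↑(RemF.filter fun x => m < x ∧ x < m') := by
    ext b
    constructor
    · rintro ⟨i'', ⟨h1, h2, h3⟩, rfl⟩
      have hres := (hasRemovable_iff p r hf i'').mp h3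
      have hdvd : (p : ℤ) ∣ bet f i'' - s₀ :=
        (dvd_iff_cast p _ _).mpr (hres.2.trans hs₀.symm)
      obtain ⟨x, hx⟩ := hdvd
      have hbx : bet f i'' = s₀ + p * x := by linarith
      have hone : bet f i < bet f i'' := bet_strictAnti hf h2
      have htwo : bet f i'' < bet f i' := bet_strictAnti hf h1
      rw [hi, hbx] at hone
      rw [hi', hbx] at htwo
      refine ⟨x, ?_, hbx.symm⟩
      simp only [Finset.mem_coe, Finset.mem_filter, hRemF]
      refine ⟨⟨?_, ?_⟩, ?_, ?_⟩
      · rw [← hbx]; exact ⟨i'', rfl⟩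
      · have heq : s₀ - 1 + p * x = bet f i'' - 1 := by rw [hbx]; ring
        rw [heq]; exact hres.1
      · exact (mul_lt_mul_iff_right₀ hpz).mp (by linarith)
      · have : p * x < p * m' := by linarith
        exact (mul_lt_mul_iff_right₀ hpz).mp this
    · rintro ⟨x, hxmem, rfl⟩
      simp only [Finset.mem_coe, Finset.mem_filter, hRemF] at hxmem
      obtain ⟨⟨hxB, hxNB⟩, hmx, hxm'⟩ := hxmem
      obtain ⟨i'', hbi⟩ := hxB
      have hrem : HasRemovable p r f i'' := by
        rw [hasRemovable_iff p r hf]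
        constructor
        · have heq : bet f i'' - 1 = s₀ - 1 + p * x := by rw [hbi]; ring
          rw [heq]; exact hxNB
        · calc ((bet f i'' : ℤ) : ZMod p) = ((s₀ + p * x : ℤ) : ZMod p) := by rw [hbi]
            _ = r + 1 := by push_cast; rw [ZMod.natCast_self, hs₀]; ring
      have h2 : i'' < i := by
        rw [← (bet_strictAnti hf).lt_iff_gt]
        rw [hbi, hi]
        nlinarith
      have h1 : i' < i'' := by
        rw [← (bet_strictAnti hf).lt_iff_gt]
        rw [hbi, hi']
        nlinarith
      exact ⟨i'', ⟨h1, h2, hrem⟩, hbi⟩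
  have hinj1 : Set.InjOn (bet f) T := (bet_strictAnti hf).injective.injOn
  have hinj2 : Set.InjOn (fun x : ℤ => s₀ + p * x) ↑(RemF.filter fun x => m < x ∧ x < m') := by
    intro a _ b _ h
    simp only at h
    have : p * a = p * b := by linarith
    exact mul_left_cancel₀ (by omega) this
  calc T.ncard = (bet f '' T).ncard := (Set.ncard_image_of_injOn hinj1).symm
    _ = ((fun x : ℤ => s₀ + p * x) '' ↑(RemF.filter fun x => m < x ∧ x < m')).ncard := by
        rw [himg]
    _ = (↑(RemF.filter fun x => m < x ∧ x < m') : Set ℤ).ncard :=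
        Set.ncard_image_of_injOn hinj2
    _ = (RemF.filter fun x => m < x ∧ x < m').card := Set.ncard_coe_finset _

lemma countAdd (hf : Antitone f) {p : ℕ} (hp : 2 ≤ p) (r : ZMod p)
    (s₀ : ℤ) (hs₀ : ((s₀ : ℤ) : ZMod p) = r + 1) (AddF : Finset ℤ)
    (hAddF : ∀ x : ℤ, x ∈ AddF ↔ (s₀ - 1 + p * x ∈ Bset f ∧ s₀ + p * x ∉ Bset f))
    {i i' : ℕ} {m m' : ℤ} (hi : bet f i = s₀ + p * m) (hi' : bet f i' = s₀ - 1 + p * m') :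
    {i'' | i' < i'' ∧ i'' < i ∧ HasAddable p r f i''}.ncard
      = (AddF.filter fun x => m < x ∧ x < m').card := by
  have hpz : (0 : ℤ) < p := by exact_mod_cast (by omega : 0 < p)
  have hp2 : (2 : ℤ) ≤ p := by exact_mod_cast hp
  have hs₁ : ((s₀ - 1 : ℤ) : ZMod p) = r := by
    push_cast
    rw [hs₀]
    ring
  set T := {i'' | i' < i'' ∧ i'' < i ∧ HasAddable p r f i''} with hT
  have himg : bet f '' T
      = (fun x : ℤ => s₀ - 1 + p * x) '' ↑(AddF.filter fun x => m < x ∧ x < m') := by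
    ext b
    constructor
    · rintro ⟨i'', ⟨h1, h2, h3⟩, rfl⟩
      have hres := (hasAddable_iff p r hf i'').mp h3
      have hdvd : (p : ℤ) ∣ bet f i'' - (s₀ - 1) :=
        (dvd_iff_cast p _ _).mpr (hres.2.trans hs₁.symm)
      obtain ⟨x, hx⟩ := hdvd
      have hbx : bet f i'' = s₀ - 1 + p * x := by linarith
      have hone : bet f i < bet f i'' := bet_strictAnti hf h2
      have htwo : bet f i'' < bet f i' := bet_strictAnti hf h1
      rw [hi, hbx] at hone
      rw [hi', hbx] at htwo
      refine ⟨x, ?_, hbx.symm⟩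
      simp only [Finset.mem_coe, Finset.mem_filter, hAddF]
      refine ⟨⟨?_, ?_⟩, ?_, ?_⟩
      · rw [← hbx]; exact ⟨i'', rfl⟩
      · have heq : s₀ + p * x = bet f i'' + 1 := by rw [hbx]; ring
        rw [heq]; exact hres.1
      · nlinarith
      · exact (mul_lt_mul_iff_right₀ hpz).mp (by linarith)
    · rintro ⟨x, hxmem, rfl⟩
      simp only [Finset.mem_coe, Finset.mem_filter, hAddF] at hxmem
      obtain ⟨⟨hxB, hxNB⟩, hmx, hxm'⟩ := hxmem
      obtain ⟨i'', hbi⟩ := hxB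
      have hadd : HasAddable p r f i'' := by
        rw [hasAddable_iff p r hf]
        constructor
        · have heq : bet f i'' + 1 = s₀ + p * x := by rw [hbi]; ring
          rw [heq]; exact hxNB
        · calc ((bet f i'' : ℤ) : ZMod p) = ((s₀ - 1 + p * x : ℤ) : ZMod p) := by rw [hbi]
            _ = r := by push_cast; rw [ZMod.natCast_self, hs₀]; ring
      have h2 : i'' < i := by
        rw [← (bet_strictAnti hf).lt_iff_gt]
        rw [hbi, hi]
        nlinarith
      have h1 : i' < i'' := by
        rw [← (bet_strictAnti hf).lt_iff_gt]
        rw [hbi, hi']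
        nlinarith
      exact ⟨i'', ⟨h1, h2, hadd⟩, hbi⟩
  have hinj1 : Set.InjOn (bet f) T := (bet_strictAnti hf).injective.injOn
  have hinj2 : Set.InjOn (fun x : ℤ => s₀ - 1 + p * x)
      ↑(AddF.filter fun x => m < x ∧ x < m') := by
    intro a _ b _ h
    simp only at h
    have : p * a = p * b := by linarith
    exact mul_left_cancel₀ (by omega) this
  calc T.ncard = (bet f '' T).ncard := (Set.ncard_image_of_injOn hinj1).symm
    _ = ((fun x : ℤ => s₀ - 1 + p * x) '' ↑(AddF.filter fun x => m < x ∧ x < m')).ncard := by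
        rw [himg]
    _ = (↑(AddF.filter fun x => m < x ∧ x < m') : Set ℤ).ncard :=
        Set.ncard_image_of_injOn hinj2
    _ = (AddF.filter fun x => m < x ∧ x < m').card := Set.ncard_coe_finset _

end PWaux2


open PWaux2

/-- If `μ` has exactly `k` normal `r`-nodes, then removing all `k` of them yields a
partition whose `p`-weight is at most the `p`-weight of `μ`. -/
theorem pWeight_removeNormals_le (p : ℕ) (hp : 2 ≤ p) (r : ZMod p) (f : ℕ → ℕ)
    (hf : Antitone f) (hfin : (Function.support f).Finite) (k : ℕ)
    (hk : Set.ncard {i | IsNormal p r f i} = k) :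
    pWeight p (fun i => if IsNormal p r f i then f i - 1 else f i) ≤ pWeight p f := by
  classical
  clear hk
  set g : ℕ → ℕ := fun i => if IsNormal p r f i then f i - 1 else f i with hgdef
  have hpz : 0 < p := by omega
  have hpz' : (0 : ℤ) < p := by exact_mod_cast hpz
  have hp2' : (2 : ℤ) ≤ p := by exact_mod_cast hp
  haveI : NeZero p := ⟨by omega⟩
  haveI : Fact (1 < p) := ⟨by omega⟩
  have hremN : ∀ i, IsNormal p r f i → f (i + 1) < f i := fun i h => h.1.1
  have hg_le : ∀ i, g i ≤ f i := by
    intro i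
    simp only [hgdef]
    split <;> omega
  have hg : Antitone g := by
    apply antitone_nat_of_succ_le
    intro i
    have h1 : f (i + 1) ≤ f i := hf (by omega)
    by_cases hni : IsNormal p r f i
    · have h5 := hremN _ hni
      simp only [hgdef, hni, if_true]
      split <;> omega
    · simp only [hgdef, hni, if_false]
      split <;> omega
  have hgfin : (Function.support g).Finite := by
    apply hfin.subset
    intro x hx
    simp only [Function.mem_support] at hx ⊢
    intro h0
    apply hx
    simp only [hgdef, h0]
    split <;> omega
  have hz : ∃ n, f n = 0 := exists_zero hfin
  have hgz : ∃ n, g n = 0 := exists_zero hgfin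
  set s₀ : ℤ := ((r + 1 : ZMod p).val : ℤ) with hs₀def
  have hs₀ : ((s₀ : ℤ) : ZMod p) = r + 1 := by
    simp only [hs₀def]
    push_cast
    simp [ZMod.natCast_val, ZMod.cast_id]
  have hs₁ : ((s₀ - 1 : ℤ) : ZMod p) = r := by
    push_cast
    rw [hs₀]
    ring
  have hs₀0 : 0 ≤ s₀ := Int.natCast_nonneg _
  have hr_ne : r ≠ r + 1 := by
    intro h3
    have h4 : (0 : ZMod p) = 1 := by linear_combination h3
    exact one_ne_zero h4.symm
  have hnormres : ∀ i, IsNormal p r f i → ((bet f i : ℤ) : ZMod p) = r + 1 :=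
    fun i h => ((hasRemovable_iff p r hf i).mp h.1).2
  have hbetg : ∀ i, bet g i = if IsNormal p r f i then bet f i - 1 else bet f i := by
    intro i
    by_cases h : IsNormal p r f i
    · have h1 : 1 ≤ f i := by have := hremN i h; omega
      simp only [bet, hgdef, h, if_true]
      omega
    · simp only [bet, hgdef, h, if_false]
  -- level sets
  set S := {m : ℤ | s₀ + p * m ∈ Bset f} with hSdef
  set R := {m : ℤ | s₀ - 1 + p * m ∈ Bset f} with hRdef
  set N := {m : ℤ | ∃ i, IsNormal p r f i ∧ bet f i = s₀ + p * m} with hNdef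
  -- cutoff
  set t : ℤ := -(colN f 0 : ℤ) - s₀ - 2 with htdef
  have hpm_le : ∀ m : ℤ, m < t → p * m ≤ m := by
    intro m hm
    have hm0 : m ≤ 0 := by omega
    nlinarith
  have hSlo : ∀ m : ℤ, m < t → m ∈ S := by
    intro m hm
    exact low_mem_Bset hf hz (by have := hpm_le m hm; omega)
  have hRlo : ∀ m : ℤ, m < t → m ∈ R := by
    intro m hm
    exact low_mem_Bset hf hz (by have := hpm_le m hm; omega)
  have hlevfin : ∀ s : ℤ, ({m : ℤ | s + p * m ∈ Bset f} ∩ Set.Ici t).Finite := by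
    intro s
    have hBfin := Bset_Ici_finite hf (s + p * t) (f := f)
    have hpre : ((fun m : ℤ => s + p * m) ⁻¹' (Bset f ∩ Set.Ici (s + p * t))).Finite := by
      apply Set.Finite.preimage _ hBfin
      intro a _ b _ h
      simp only at h
      have : (p : ℤ) * a = p * b := by linarith
      exact mul_left_cancel₀ (by omega) this
    apply hpre.subset
    rintro m ⟨h1, h2⟩
    refine ⟨h1, ?_⟩
    simp only [Set.mem_Ici] at h2 ⊢
    nlinarith
  have hSfin : (S ∩ Set.Ici t).Finite := hlevfin s₀
  have hRfin : (R ∩ Set.Ici t).Finite := hlevfin (s₀ - 1)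
  have hRemfin : (S \ R).Finite := by
    apply hSfin.subset
    rintro m ⟨h1, h2⟩
    exact ⟨h1, Set.mem_Ici.mpr (le_of_not_gt (fun hc => h2 (hRlo m hc)))⟩
  have hAddfin : (R \ S).Finite := by
    apply hRfin.subset
    rintro m ⟨h1, h2⟩
    exact ⟨h1, Set.mem_Ici.mpr (le_of_not_gt (fun hc => h2 (hSlo m hc)))⟩
  have hNsub : N ⊆ S \ R := by
    rintro m ⟨i, hni, hbi⟩
    constructor
    · exact ⟨i, hbi⟩
    · intro hmR
      have hres := (hasRemovable_iff p r hf i).mp hni.1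
      apply hres.1
      have : bet f i - 1 = s₀ - 1 + p * m := by rw [hbi]; ring
      rw [this]
      exact hmR
  have hNfin : N.Finite := hRemfin.subset hNsub
  set FS := hSfin.toFinset with hFSdef
  set FR := hRfin.toFinset with hFRdef
  set RemF := hRemfin.toFinset with hRemFdef
  set AddF := hAddfin.toFinset with hAddFdef
  set NF := hNfin.toFinset with hNFdef
  have hFSchar : ∀ m : ℤ, m ∈ FS ↔ m ∈ S ∧ t ≤ m := by
    intro m
    rw [hFSdef, Set.Finite.mem_toFinset]
    exact Iff.rfl
  have hFRchar : ∀ m : ℤ, m ∈ FR ↔ m ∈ R ∧ t ≤ m := by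
    intro m
    rw [hFRdef, Set.Finite.mem_toFinset]
    exact Iff.rfl
  have hRemchar : ∀ x : ℤ, x ∈ RemF ↔ (s₀ + p * x ∈ Bset f ∧ s₀ - 1 + p * x ∉ Bset f) := by
    intro x
    rw [hRemFdef, Set.Finite.mem_toFinset]
    exact Iff.rfl
  have hAddchar : ∀ x : ℤ, x ∈ AddF ↔ (s₀ - 1 + p * x ∈ Bset f ∧ s₀ + p * x ∉ Bset f) := by
    intro x
    rw [hAddFdef, Set.Finite.mem_toFinset]
    exact Iff.rfl
  have hNFchar : ∀ m : ℤ, m ∈ NF ↔ m ∈ N := by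
    intro m
    rw [hNFdef, Set.Finite.mem_toFinset]
  -- bridge: every level-normal position comes from a normal row
  have hbridge : NormSet RemF AddF ⊆ NF := by
    intro m hm
    have hmRem : m ∈ RemF := (Finset.mem_filter.mp hm).1
    obtain ⟨hmS, hmNR⟩ := (hRemchar m).mp hmRem
    obtain ⟨i, hbi⟩ := hmS
    have hremi : HasRemovable p r f i := by
      rw [hasRemovable_iff p r hf]
      constructor
      · have heq : bet f i - 1 = s₀ - 1 + p * m := by rw [hbi]; ring
        rw [heq]
        exact hmNR
      · calc ((bet f i : ℤ) : ZMod p) = ((s₀ + p * m : ℤ) : ZMod p) := by rw [hbi]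
          _ = r + 1 := by push_cast; rw [ZMod.natCast_self, hs₀]; ring
    have hnorm : IsNormal p r f i := by
      refine ⟨hremi, ?_⟩
      intro i' hi'lt haddi'
      have hres' := (hasAddable_iff p r hf i').mp haddi'
      have hdvd : (p : ℤ) ∣ bet f i' - (s₀ - 1) :=
        (dvd_iff_cast p _ _).mpr (hres'.2.trans hs₁.symm)
      obtain ⟨x', hx'⟩ := hdvd
      have hbi' : bet f i' = s₀ - 1 + p * x' := by linarith
      have hx'Add : x' ∈ AddF := by
        rw [hAddchar]
        refine ⟨?_, ?_⟩
        · rw [← hbi']; exact ⟨i', rfl⟩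
        · have heq : s₀ + p * x' = bet f i' + 1 := by rw [hbi']; ring
          rw [heq]
          exact hres'.1
      have hmm' : m < x' := by
        have hlt : bet f i < bet f i' := bet_strictAnti hf hi'lt
        rw [hbi, hbi'] at hlt
        by_contra hcon
        push_neg at hcon
        have : (p : ℤ) * x' ≤ p * m := by nlinarith
        omega
      have hcond := (Finset.mem_filter.mp hm).2 x' hx'Add hmm'
      rw [← countRem hf hp r s₀ hs₀ RemF hRemchar hbi hbi',
        ← countAdd hf hp r s₀ hs₀ AddF hAddchar hbi hbi'] at hcond
      exact hcond
    exact (hNFchar m).mpr ⟨i, hnorm, hbi⟩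
  -- matching and cardinalities
  have hdisjRA : Disjoint RemF AddF := by
    rw [Finset.disjoint_left]
    intro x hx hx'
    exact ((hRemchar x).mp hx).2 ((hAddchar x).mp hx').1
  have hmatch := matching RemF AddF hdisjRA
  have hNormNF : (NormSet RemF AddF).card ≤ NF.card := Finset.card_le_card hbridge
  have hFSsplit : FS.card = (FS ∩ FR).card + RemF.card := by
    rw [← Finset.card_union_of_disjoint]
    · congr 1
      ext m
      simp only [Finset.mem_union, Finset.mem_inter, hFSchar, hFRchar, hRemchar]
      constructor
      · rintro ⟨h1, h2⟩
        by_cases h3 : m ∈ R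
        · exact Or.inl ⟨⟨h1, h2⟩, h3, h2⟩
        · exact Or.inr ⟨h1, h3⟩
      · rintro (⟨⟨h1, h2⟩, _⟩ | ⟨h1, h2⟩)
        · exact ⟨h1, h2⟩
        · exact ⟨h1, le_of_not_gt fun hc => h2 (hRlo m hc)⟩
    · rw [Finset.disjoint_left]
      intro x hx hx'
      exact ((hRemchar x).mp hx').2 ((hFRchar x).mp (Finset.mem_inter.mp hx).2).1
  have hFRsplit : FR.card = (FS ∩ FR).card + AddF.card := by
    rw [← Finset.card_union_of_disjoint]
    · congr 1
      ext m
      simp only [Finset.mem_union, Finset.mem_inter, hFSchar, hFRchar, hAddchar]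
      constructor
      · rintro ⟨h1, h2⟩
        by_cases h3 : m ∈ S
        · exact Or.inl ⟨⟨h3, h2⟩, h1, h2⟩
        · exact Or.inr ⟨h1, h3⟩
      · rintro (⟨⟨_, _⟩, h1, h2⟩ | ⟨h1, h2⟩)
        · exact ⟨h1, h2⟩
        · exact ⟨h1, le_of_not_gt fun hc => h2 (hSlo m hc)⟩
    · rw [Finset.disjoint_left]
      intro x hx hx'
      exact ((hAddchar x).mp hx').2 ((hFSchar x).mp (Finset.mem_inter.mp hx).1).1
  have hkcard : FS.card ≤ FR.card + NF.card := by omega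
  -- energy
  have hNS : ∀ m ∈ NF, m ∈ S := fun m hm => (hNsub ((hNFchar m).mp hm)).1
  have hNR : ∀ m ∈ NF, m ∉ R := fun m hm => (hNsub ((hNFchar m).mp hm)).2
  have hNt : ∀ m ∈ NF, t ≤ m :=
    fun m hm => le_of_not_gt fun hc => hNR m hm (hRlo m hc)
  have henergy := energy_le S R NF FS FR t hSlo hRlo hFSchar hFRchar hNS hNR hNt hkcard
  -- level sets of g
  have hS' : {m : ℤ | s₀ + p * m ∈ Bset g} = S \ ↑NF := by
    ext m
    simp only [Set.mem_setOf_eq, Set.mem_diff, Finset.mem_coe]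
    constructor
    · rintro ⟨j, hj⟩
      have hjn : ¬ IsNormal p r f j := by
        intro hn
        have h1 : bet g j = bet f j - 1 := by rw [hbetg j, if_pos hn]
        have h2 : ((bet g j : ℤ) : ZMod p) = r := by
          rw [h1]
          push_cast
          rw [hnormres j hn]
          ring
        have h3 : ((bet g j : ℤ) : ZMod p) = r + 1 := by
          rw [hj]
          push_cast
          rw [ZMod.natCast_self, hs₀]
          ring
        rw [h2] at h3
        exact hr_ne h3
      have hbj : bet f j = s₀ + p * m := by
        rw [← hj, hbetg j, if_neg hjn]
      constructor
      · exact ⟨j, hbj⟩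
      · intro hmN
        obtain ⟨i, hni, hbi⟩ := (hNFchar m).mp hmN
        have : i = j := (bet_strictAnti hf).injective (hbi.trans hbj.symm)
        exact hjn (this ▸ hni)
    · rintro ⟨⟨j, hj⟩, hmN⟩
      have hjn : ¬ IsNormal p r f j := by
        intro hn
        exact hmN ((hNFchar m).mpr ⟨j, hn, hj⟩)
      exact ⟨j, by rw [hbetg j, if_neg hjn]; exact hj⟩
  have hR' : {m : ℤ | s₀ - 1 + p * m ∈ Bset g} = R ∪ ↑NF := by
    ext m
    simp only [Set.mem_setOf_eq, Set.mem_union, Finset.mem_coe]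
    constructor
    · rintro ⟨j, hj⟩
      by_cases hn : IsNormal p r f j
      · right
        apply (hNFchar m).mpr
        refine ⟨j, hn, ?_⟩
        have : bet g j = bet f j - 1 := by rw [hbetg j, if_pos hn]
        rw [this] at hj
        omega
      · left
        have : bet g j = bet f j := by rw [hbetg j, if_neg hn]
        rw [this] at hj
        exact ⟨j, hj⟩
    · rintro (hmR | hmN)
      · obtain ⟨j, hj⟩ := hmR
        have hjn : ¬ IsNormal p r f j := by
          intro hn
          have h1 : ((bet f j : ℤ) : ZMod p) = r := by
            rw [hj]
            push_cast
            rw [ZMod.natCast_self, hs₀]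
            ring
          have h2 := hnormres j hn
          rw [h1] at h2
          exact hr_ne h2
        exact ⟨j, by rw [hbetg j, if_neg hjn]; exact hj⟩
      · obtain ⟨i, hni, hbi⟩ := (hNFchar m).mp hmN
        refine ⟨i, ?_⟩
        rw [hbetg i, if_pos hni, hbi]
        ring
  -- off-class sets agree
  have hBB' : ∀ x : ℤ, ¬ (p : ℤ) ∣ x - s₀ → ¬ (p : ℤ) ∣ x - (s₀ - 1) →
      (x ∈ Bset f ↔ x ∈ Bset g) := by
    intro x h1 h2
    constructor
    · rintro ⟨j, hj⟩
      have hjn : ¬ IsNormal p r f j := by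
        intro hn
        apply h1
        rw [← hj]
        exact (dvd_iff_cast p _ _).mpr ((hnormres j hn).trans hs₀.symm)
      exact ⟨j, by rw [hbetg j, if_neg hjn]; exact hj⟩
    · rintro ⟨j, hj⟩
      by_cases hn : IsNormal p r f j
      · exfalso
        apply h2
        rw [← hj, hbetg j, if_pos hn]
        apply (dvd_iff_cast p _ _).mpr
        rw [hs₁]
        push_cast
        rw [hnormres j hn]
        ring
      · exact ⟨j, by rw [← hj, hbetg j, if_neg hn]⟩
  have hQeq : {y ∈ PairSet p (Bset g) | ¬ (p : ℤ) ∣ y.1 - s₀ ∧ ¬ (p : ℤ) ∣ y.1 - (s₀ - 1)}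
      = {y ∈ PairSet p (Bset f) | ¬ (p : ℤ) ∣ y.1 - s₀ ∧ ¬ (p : ℤ) ∣ y.1 - (s₀ - 1)} := by
    ext y
    simp only [Set.mem_setOf_eq, PairSet]
    constructor
    · rintro ⟨⟨hy1, hy2, hlt, hdvd⟩, hnd1, hnd2⟩
      have hnd1' : ¬ (p : ℤ) ∣ y.2 - s₀ := fun hc => hnd1 (by
        have := Int.dvd_add hdvd hc
        simpa using (by
          have h3 : y.1 - y.2 + (y.2 - s₀) = y.1 - s₀ := by ring
          rwa [h3] at this))
      have hnd2' : ¬ (p : ℤ) ∣ y.2 - (s₀ - 1) := fun hc => hnd2 (by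
        have := Int.dvd_add hdvd hc
        have h3 : y.1 - y.2 + (y.2 - (s₀ - 1)) = y.1 - (s₀ - 1) := by ring
        rwa [h3] at this)
      exact ⟨⟨(hBB' y.1 hnd1 hnd2).mpr hy1,
        fun hc => hy2 ((hBB' y.2 hnd1' hnd2').mp hc), hlt, hdvd⟩, hnd1, hnd2⟩
    · rintro ⟨⟨hy1, hy2, hlt, hdvd⟩, hnd1, hnd2⟩
      have hnd1' : ¬ (p : ℤ) ∣ y.2 - s₀ := fun hc => hnd1 (by
        have := Int.dvd_add hdvd hc
        have h3 : y.1 - y.2 + (y.2 - s₀) = y.1 - s₀ := by ring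
        rwa [h3] at this)
      have hnd2' : ¬ (p : ℤ) ∣ y.2 - (s₀ - 1) := fun hc => hnd2 (by
        have := Int.dvd_add hdvd hc
        have h3 : y.1 - y.2 + (y.2 - (s₀ - 1)) = y.1 - (s₀ - 1) := by ring
        rwa [h3] at this)
      exact ⟨⟨(hBB' y.1 hnd1 hnd2).mp hy1,
        fun hc => hy2 ((hBB' y.2 hnd1' hnd2').mpr hc), hlt, hdvd⟩, hnd1, hnd2⟩
  -- assemble
  obtain ⟨hw_f, hfin_f⟩ := pweight_eq p hf hfin
  obtain ⟨hw_g, hfin_g⟩ := pweight_eq p hg hgfin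
  have hsplit_f := pairset_split p hp (Bset f) s₀ hfin_f
  have hsplit_g := pairset_split p hp (Bset g) s₀ hfin_g
  have hc1 := class_ncard p hpz (Bset f) s₀
  have hc2 := class_ncard p hpz (Bset f) (s₀ - 1)
  have hc3 := class_ncard p hpz (Bset g) s₀
  have hc4 := class_ncard p hpz (Bset g) (s₀ - 1)
  rw [hS'] at hc3
  rw [hR'] at hc4
  rw [← hSdef] at hc1
  rw [← hRdef] at hc2
  show pWeight p g ≤ pWeight p f
  rw [hw_f, hw_g, hsplit_f, hsplit_g, hQeq, hc1, hc2, hc3, hc4]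
  omega
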